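/- For the Korobov-kernel approximation problem, the problem is strongly polynomially tractable if and only if A_* := liminf_{k→∞} ln(g_k^{-1})/ln k > 0, and in that case the exponent of SPT is p* = max{2/A_*, 1/r_1}. -/

import Mathlib

open Filter Real Set

/-- Information complexity: the number of multi-indices `(j₁,…,j_d) ∈ ℕ^d`
(here 0-indexed, so `Λ k j` stands for `λ(k+1, j+1)`) whose eigenvalue product exceeds `ε²`. -/
noncomputable def infoCount (Λ : ℕ → ℕ → ℝ) (d : ℕ) (ε : ℝ) : ℕ :=
  Nat.card {j : Fin d → ℕ | ε ^ 2 < ∏ k : Fin d, Λ k.val (j k)}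

/-- Strong polynomial tractability. -/
def IsSPT (Λ : ℕ → ℕ → ℝ) : Prop :=
  ∃ C p : ℝ, 0 ≤ C ∧ 0 ≤ p ∧ ∀ d : ℕ, 1 ≤ d → ∀ ε : ℝ, ε ∈ Set.Ioo (0 : ℝ) 1 →
    (infoCount Λ d ε : ℝ) ≤ C * ε ^ (-p)

/-- The exponent `p*` of strong polynomial tractability. -/
noncomputable def sptExponent (Λ : ℕ → ℕ → ℝ) : ℝ :=
  sInf {p : ℝ | 0 ≤ p ∧ ∃ C : ℝ, 0 ≤ C ∧ ∀ d : ℕ, 1 ≤ d → ∀ ε : ℝ, ε ∈ Set.Ioo (0 : ℝ) 1 →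
    (infoCount Λ d ε : ℝ) ≤ C * ε ^ (-p)}

/-- Polynomial tractability. -/
def IsPT (Λ : ℕ → ℕ → ℝ) : Prop :=
  ∃ C p q : ℝ, 0 ≤ C ∧ 0 ≤ p ∧ 0 ≤ q ∧ ∀ d : ℕ, 1 ≤ d → ∀ ε : ℝ, ε ∈ Set.Ioo (0 : ℝ) 1 →
    (infoCount Λ d ε : ℝ) ≤ C * (d : ℝ) ^ q * ε ^ (-p)

/-- Quasi-polynomial tractability. -/
def IsQPT (Λ : ℕ → ℕ → ℝ) : Prop :=
  ∃ C t : ℝ, 0 < C ∧ 0 < t ∧ ∀ d : ℕ, 1 ≤ d → ∀ ε : ℝ, ε ∈ Set.Ioo (0 : ℝ) 1 →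
    (infoCount Λ d ε : ℝ) ≤ C * Real.exp (t * (1 + Real.log d) * (1 + Real.log ε⁻¹))

/-- The exponent `t*` of quasi-polynomial tractability. -/
noncomputable def qptExponent (Λ : ℕ → ℕ → ℝ) : ℝ :=
  sInf {t : ℝ | 0 < t ∧ ∃ C : ℝ, 0 < C ∧ ∀ d : ℕ, 1 ≤ d → ∀ ε : ℝ, ε ∈ Set.Ioo (0 : ℝ) 1 →
    (infoCount Λ d ε : ℝ) ≤ C * Real.exp (t * (1 + Real.log d) * (1 + Real.log ε⁻¹))}

/-- The filter describing `ε⁻¹ + d → ∞` over pairs `(ε, d)` with `ε ∈ (0,1)` and `d ≥ 1`. -/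
noncomputable def wtFilter : Filter (ℝ × ℕ) :=
  (Filter.comap (fun p : ℝ × ℕ => p.1⁻¹ + (p.2 : ℝ)) Filter.atTop) ⊓
    Filter.principal {p : ℝ × ℕ | p.1 ∈ Set.Ioo (0 : ℝ) 1 ∧ 1 ≤ p.2}

/-- `(s,t)`-weak tractability: `ln n(ε,d) / (ε^{-s} + d^t) → 0` as `ε⁻¹ + d → ∞`. -/
def IsWT (Λ : ℕ → ℕ → ℝ) (s t : ℝ) : Prop :=
  Filter.Tendsto
    (fun p : ℝ × ℕ => Real.log (infoCount Λ p.2 p.1) / (p.1 ^ (-s) + (p.2 : ℝ) ^ t))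
    wtFilter (nhds 0)

/-- Uniform weak tractability. -/
def IsUWT (Λ : ℕ → ℕ → ℝ) : Prop := ∀ s t : ℝ, 0 < s → 0 < t → IsWT Λ s t

/-- The problem suffers from the curse of dimensionality. -/
def SuffersCurse (Λ : ℕ → ℕ → ℝ) : Prop :=
  ∃ C ε₀ α : ℝ, 0 < C ∧ 0 < ε₀ ∧ 0 < α ∧ ∀ ε : ℝ, 0 < ε → ε ≤ ε₀ →
    {d : ℕ | C * (1 + α) ^ d ≤ (infoCount Λ d ε : ℝ)}.Infinite

/-- Condition (3) of Property (P) for a given `τ > 0`: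
`H(k,τ) = ∑_{j≥2} (λ(k,j)/λ(k,2))^τ` is finite for each `k` and
`sup_k H(k,τ) = H(1,τ)` (equivalently `H(k,τ) ≤ H(1,τ)` for all `k`). -/
def Cond3 (Λ : ℕ → ℕ → ℝ) (τ : ℝ) : Prop :=
  0 < τ ∧ (∀ k, Summable fun j : ℕ => (Λ k (j + 1) / Λ k 1) ^ τ) ∧
    ∀ k, (∑' j : ℕ, (Λ k (j + 1) / Λ k 1) ^ τ) ≤ ∑' j : ℕ, (Λ 0 (j + 1) / Λ 0 1) ^ τ

/-- `τ₀`: the infimum of all `τ` satisfying Condition (3). -/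
noncomputable def tau0 (Λ : ℕ → ℕ → ℝ) : ℝ := sInf {τ : ℝ | Cond3 Λ τ}

/-- Property (P): each sequence `λ(k,·)` is nonincreasing and nonnegative with `λ(k,1) = 1`
and `λ(k,2) > 0`, `h_k = λ(k,2)` is nonincreasing, and Condition (3) holds for some `τ > 0`. -/
structure PropertyP (Λ : ℕ → ℕ → ℝ) : Prop where
  nonneg : ∀ k j, 0 ≤ Λ k j
  anti : ∀ k, Antitone (Λ k)
  first : ∀ k, Λ k 0 = 1
  second_pos : ∀ k, 0 < Λ k 1
  h_anti : Antitone fun k => Λ k 1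
  cond3 : ∃ τ : ℝ, Cond3 Λ τ


/-- Eigenvalues of the Korobov-kernel problem: `λ(k,1) = 1` and
`λ(k,2j) = λ(k,2j+1) = g_k j^{-2r_k}` for `j ≥ 1`
(0-indexed in both variables: `korobovLam g r k j = λ(k+1, j+1)`). -/
noncomputable def korobovLam (g r : ℕ → ℝ) (k j : ℕ) : ℝ :=
  if j = 0 then 1 else g k * (((j + 1) / 2 : ℕ) : ℝ) ^ (-(2 * r k))

namespace KorobovAux

open Filter Real Set

lemma kor_zero (g r : ℕ → ℝ) (k : ℕ) : korobovLam g r k 0 = 1 := by simp [korobovLam]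

lemma kor_succ (g r : ℕ → ℝ) (k j : ℕ) :
    korobovLam g r k (j + 1) = g k * (((j + 2) / 2 : ℕ) : ℝ) ^ (-(2 * r k)) := by
  rw [korobovLam, if_neg (by omega), show j + 1 + 1 = j + 2 from by omega]

lemma m_one_le (j : ℕ) : (1 : ℝ) ≤ (((j + 2) / 2 : ℕ) : ℝ) := by
  have : 1 ≤ ((j + 2) / 2 : ℕ) := by omega
  exact_mod_cast this

lemma m_le (j : ℕ) : (((j + 2) / 2 : ℕ) : ℝ) ≤ ((j : ℝ) + 2) / 2 := by
  have h := Nat.cast_div_le (m := j + 2) (n := 2) (α := ℝ)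
  push_cast at h ⊢
  linarith

lemma m_ge (j : ℕ) : ((j : ℝ) + 1) / 2 ≤ (((j + 2) / 2 : ℕ) : ℝ) := by
  have : j + 1 ≤ 2 * ((j + 2) / 2) := by omega
  have h : ((j : ℝ) + 1) ≤ 2 * (((j + 2) / 2 : ℕ) : ℝ) := by exact_mod_cast this
  linarith

lemma kor_pos (g r : ℕ → ℝ) (hgpos : ∀ k, 0 < g k) (k j : ℕ) : 0 < korobovLam g r k j := by
  cases j with
  | zero => rw [kor_zero]; norm_num
  | succ j =>
    rw [kor_succ]
    exact mul_pos (hgpos k) (Real.rpow_pos_of_pos (lt_of_lt_of_le one_pos (m_one_le j)) _)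

/-- summable auxiliary: `∑ (j+1)^(-s)` for `s > 1`. -/
lemma summable_shift_rpow {s : ℝ} (hs : 1 < s) :
    Summable (fun j : ℕ => ((j : ℝ) + 1) ^ (-s)) := by
  have h : Summable (fun n : ℕ => (n : ℝ) ^ (-s)) :=
    Real.summable_nat_rpow.mpr (by linarith)
  have := (summable_nat_add_iff 1).mpr h
  refine this.congr fun n => ?_
  push_cast
  norm_num

end KorobovAux
namespace KorobovAux

/-- The constant `Z(s) = 2^s ∑_{j≥0} (j+1)^{-s}`. -/
noncomputable def Zc (s : ℝ) : ℝ := 2 ^ s * ∑' j : ℕ, ((j : ℝ) + 1) ^ (-s)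

lemma Zc_nonneg (s : ℝ) : 0 ≤ Zc s :=
  mul_nonneg (Real.rpow_nonneg (by norm_num) _)
    (tsum_nonneg fun j => Real.rpow_nonneg (by positivity) _)

section Coord

variable {g r : ℕ → ℝ} {τ : ℝ}
variable (hgpos : ∀ k, 0 < g k) (hr0 : 0 < r 0) (hrmono : Monotone r)
variable (hτ0 : 0 < τ) (hs : 1 < 2 * r 0 * τ)

include hgpos hr0 hrmono hτ0 hs

lemma coord_succ_le (k j : ℕ) :
    korobovLam g r k (j + 1) ^ τ ≤ g k ^ τ * (2 ^ (2 * r 0 * τ) * ((j : ℝ) + 1) ^ (-(2 * r 0 * τ))) := by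
  set s := 2 * r 0 * τ with hsdef
  set m : ℝ := (((j + 2) / 2 : ℕ) : ℝ) with hm
  have hm1 : (1 : ℝ) ≤ m := m_one_le j
  have hm0 : (0 : ℝ) < m := lt_of_lt_of_le one_pos hm1
  rw [kor_succ, Real.mul_rpow (hgpos k).le (Real.rpow_nonneg hm0.le _)]
  refine mul_le_mul_of_nonneg_left ?_ (Real.rpow_nonneg (hgpos k).le τ)
  have h1 : (m ^ (-(2 * r k))) ^ τ = m ^ (-(2 * r k) * τ) := by
    rw [← Real.rpow_mul hm0.le]
  rw [h1]
  have h2 : m ^ (-(2 * r k) * τ) ≤ m ^ (-s) := by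
    apply Real.rpow_le_rpow_of_exponent_le hm1
    have h5 : r 0 ≤ r k := hrmono (Nat.zero_le k)
    rw [hsdef]; nlinarith
  have hhalf : (0 : ℝ) < ((j : ℝ) + 1) / 2 := by positivity
  have h3 : m ^ (-s) ≤ (((j : ℝ) + 1) / 2) ^ (-s) := by
    apply Real.rpow_le_rpow_of_nonpos hhalf (m_ge j)
    rw [hsdef]; linarith
  have h4 : (((j : ℝ) + 1) / 2) ^ (-s) = 2 ^ s * ((j : ℝ) + 1) ^ (-s) := by
    rw [Real.div_rpow (by positivity) (by norm_num), Real.rpow_neg (by norm_num : (0:ℝ) ≤ 2)]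
    field_simp
  calc m ^ (-(2 * r k) * τ) ≤ m ^ (-s) := h2
    _ ≤ (((j : ℝ) + 1) / 2) ^ (-s) := h3
    _ = 2 ^ s * ((j : ℝ) + 1) ^ (-s) := h4

lemma coord_summable (k : ℕ) : Summable (fun j : ℕ => korobovLam g r k j ^ τ) := by
  rw [← summable_nat_add_iff 1]
  apply Summable.of_nonneg_of_le
    (fun j => Real.rpow_nonneg (kor_pos g r hgpos k (j + 1)).le τ)
    (fun j => coord_succ_le hgpos hr0 hrmono hτ0 hs k j)
  exact (((summable_shift_rpow hs).mul_left _).mul_left _)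

lemma coord_tsum_le (k : ℕ) :
    ∑' j : ℕ, korobovLam g r k j ^ τ ≤ 1 + g k ^ τ * Zc (2 * r 0 * τ) := by
  rw [Summable.tsum_eq_zero_add (coord_summable hgpos hr0 hrmono hτ0 hs k)]
  have h0 : korobovLam g r k 0 ^ τ = 1 := by rw [kor_zero]; exact Real.one_rpow τ
  rw [h0]
  refine add_le_add_right ?_ 1
  have hsum2 : Summable (fun j : ℕ => g k ^ τ * (2 ^ (2 * r 0 * τ) * ((j : ℝ) + 1) ^ (-(2 * r 0 * τ)))) :=
    ((summable_shift_rpow hs).mul_left _).mul_left _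
  calc ∑' j : ℕ, korobovLam g r k (j + 1) ^ τ
      ≤ ∑' j : ℕ, g k ^ τ * (2 ^ (2 * r 0 * τ) * ((j : ℝ) + 1) ^ (-(2 * r 0 * τ))) := by
        apply Summable.tsum_le_tsum (fun j => coord_succ_le hgpos hr0 hrmono hτ0 hs k j)
          ((summable_nat_add_iff 1).mpr (coord_summable hgpos hr0 hrmono hτ0 hs k)) hsum2
    _ = g k ^ τ * Zc (2 * r 0 * τ) := by
        rw [tsum_mul_left, tsum_mul_left, Zc, mul_assoc]

end Coord

end KorobovAux
namespace KorobovAux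

/-- Factorization of a tsum over `Fin d → ℕ` of a product of nonnegative summable factors. -/
lemma pi_tsum : ∀ (d : ℕ) (F : Fin d → ℕ → ℝ), (∀ k j, 0 ≤ F k j) → (∀ k, Summable (F k)) →
    Summable (fun j : Fin d → ℕ => ∏ k : Fin d, F k (j k)) ∧
    ∑' j : Fin d → ℕ, ∏ k : Fin d, F k (j k) = ∏ k : Fin d, ∑' n : ℕ, F k n := by
  intro d
  induction d with
  | zero =>
    intro F _ _
    constructor
    · exact summable_of_finite_support (Set.toFinite _)
    · rw [tsum_eq_single (fun i => i.elim0) (by intro b hb; exact absurd (funext fun i => i.elim0) hb)]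
      simp
  | succ d ih =>
    intro F hnn hsum
    obtain ⟨ihs, iht⟩ := ih (fun k => F k.succ) (fun k j => hnn k.succ j) (fun k => hsum k.succ)
    have hkey : ∀ x : ℕ × (Fin d → ℕ),
        (∏ k : Fin (d + 1), F k ((Fin.consEquiv fun _ : Fin (d + 1) => ℕ) x k))
          = F 0 x.1 * ∏ k : Fin d, F k.succ (x.2 k) := by
      intro x
      rw [Fin.prod_univ_succ]
      simp [Fin.consEquiv]
    have hsum2 : Summable (fun x : ℕ × (Fin d → ℕ) => F 0 x.1 * ∏ k : Fin d, F k.succ (x.2 k)) :=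
      Summable.mul_of_nonneg (f := F 0) (g := fun y : Fin d → ℕ => ∏ k : Fin d, F k.succ (y k))
        (hsum 0) ihs (Pi.le_def.mpr fun j => hnn 0 j)
        (Pi.le_def.mpr fun y => Finset.prod_nonneg fun k _ => hnn k.succ (y k))
    have hsummable : Summable (fun j : Fin (d + 1) → ℕ => ∏ k : Fin (d + 1), F k (j k)) :=
      ((Fin.consEquiv fun _ : Fin (d + 1) => ℕ).summable_iff).1
        (hsum2.congr fun x => (hkey x).symm)
    refine ⟨hsummable, ?_⟩
    have h2 : (∑' n : ℕ, F 0 n) * (∑' y : Fin d → ℕ, ∏ k : Fin d, F k.succ (y k))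
        = ∑' x : ℕ × (Fin d → ℕ), F 0 x.1 * ∏ k : Fin d, F k.succ (x.2 k) := by
      apply tsum_mul_tsum_of_summable_norm
      · exact (hsum 0).congr fun n => (Real.norm_of_nonneg (hnn 0 n)).symm
      · exact ihs.congr fun y =>
          (Real.norm_of_nonneg (Finset.prod_nonneg fun k _ => hnn k.succ (y k))).symm
    calc ∑' j : Fin (d + 1) → ℕ, ∏ k : Fin (d + 1), F k (j k)
        = ∑' x : ℕ × (Fin d → ℕ), ∏ k : Fin (d + 1), F k ((Fin.consEquiv fun _ : Fin (d + 1) => ℕ) x k) :=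
          ((Fin.consEquiv fun _ : Fin (d + 1) => ℕ).tsum_eq _).symm
      _ = ∑' x : ℕ × (Fin d → ℕ), F 0 x.1 * ∏ k : Fin d, F k.succ (x.2 k) := tsum_congr hkey
      _ = (∑' n : ℕ, F 0 n) * (∑' y : Fin d → ℕ, ∏ k : Fin d, F k.succ (y k)) := h2.symm
      _ = ∏ k : Fin (d + 1), ∑' n : ℕ, F k n := by rw [iht, Fin.prod_univ_succ]

end KorobovAux
namespace KorobovAux

section Count

variable {g r : ℕ → ℝ} {τ : ℝ}
variable (hgpos : ∀ k, 0 < g k) (hr0 : 0 < r 0) (hrmono : Monotone r)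
variable (hτ0 : 0 < τ) (hs : 1 < 2 * r 0 * τ)

include hgpos hr0 hrmono hτ0 hs

lemma korSet_finite {d : ℕ} {ε : ℝ} (hε : 0 < ε) :
    {j : Fin d → ℕ | ε ^ 2 < ∏ k : Fin d, korobovLam g r k.val (j k)}.Finite := by
  obtain ⟨hF, -⟩ := pi_tsum d (fun k j => korobovLam g r k.val j ^ τ)
    (fun k j => Real.rpow_nonneg (kor_pos g r hgpos _ j).le τ)
    (fun k => coord_summable hgpos hr0 hrmono hτ0 hs k.val)
  have hc : (0 : ℝ) < (ε ^ 2) ^ τ := Real.rpow_pos_of_pos (by positivity) τ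
  have hev : ∀ᶠ j : Fin d → ℕ in Filter.cofinite,
      (∏ k : Fin d, korobovLam g r k.val (j k) ^ τ) < (ε ^ 2) ^ τ :=
    hF.tendsto_cofinite_zero.eventually_lt_const hc
  refine (Filter.eventually_cofinite.mp hev).subset ?_
  intro j hj
  simp only [Set.mem_setOf_eq, not_lt]
  calc (ε ^ 2) ^ τ ≤ (∏ k : Fin d, korobovLam g r k.val (j k)) ^ τ :=
        Real.rpow_le_rpow (by positivity) (le_of_lt hj) hτ0.le
    _ = ∏ k : Fin d, korobovLam g r k.val (j k) ^ τ :=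
        (Real.finset_prod_rpow _ _ (fun k _ => (kor_pos g r hgpos _ _).le) τ).symm

lemma count_upper {d : ℕ} {ε : ℝ} (hε : 0 < ε) :
    (infoCount (korobovLam g r) d ε : ℝ) ≤
      (ε ^ 2) ^ (-τ) * ∏ k : Fin d, ∑' j : ℕ, korobovLam g r k.val j ^ τ := by
  obtain ⟨hF, hT⟩ := pi_tsum d (fun k j => korobovLam g r k.val j ^ τ)
    (fun k j => Real.rpow_nonneg (kor_pos g r hgpos _ j).le τ)
    (fun k => coord_summable hgpos hr0 hrmono hτ0 hs k.val)
  have hfin := korSet_finite hgpos hr0 hrmono hτ0 hs (g := g) (r := r) (d := d) hε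
  have hc : (0 : ℝ) < (ε ^ 2) ^ τ := Real.rpow_pos_of_pos (by positivity) τ
  have hcard : (infoCount (korobovLam g r) d ε : ℝ) = (hfin.toFinset.card : ℝ) := by
    rw [infoCount, Nat.card_coe_set_eq, Set.ncard_eq_toFinset_card _ hfin]
  have hkey : (ε ^ 2) ^ τ * (hfin.toFinset.card : ℝ) ≤
      ∏ k : Fin d, ∑' j : ℕ, korobovLam g r k.val j ^ τ := by
    rw [← hT]
    calc (ε ^ 2) ^ τ * (hfin.toFinset.card : ℝ)
        = ∑ _j ∈ hfin.toFinset, (ε ^ 2) ^ τ := by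
          rw [Finset.sum_const, nsmul_eq_mul, mul_comm]
      _ ≤ ∑ j ∈ hfin.toFinset, ∏ k : Fin d, korobovLam g r k.val (j k) ^ τ := by
          apply Finset.sum_le_sum
          intro j hj
          have hj' := hfin.mem_toFinset.mp hj
          calc (ε ^ 2) ^ τ ≤ (∏ k : Fin d, korobovLam g r k.val (j k)) ^ τ :=
                Real.rpow_le_rpow (by positivity) (le_of_lt hj') hτ0.le
            _ = ∏ k : Fin d, korobovLam g r k.val (j k) ^ τ :=
                (Real.finset_prod_rpow _ _ (fun k _ => (kor_pos g r hgpos _ _).le) τ).symm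
      _ ≤ ∑' j : Fin d → ℕ, ∏ k : Fin d, korobovLam g r k.val (j k) ^ τ :=
          Summable.sum_le_tsum _ (fun j _ => Finset.prod_nonneg fun k _ =>
            Real.rpow_nonneg (kor_pos g r hgpos _ _).le τ) hF
  rw [hcard, Real.rpow_neg (by positivity), ← div_eq_inv_mul, le_div_iff₀ hc]
  linarith [hkey]

end Count

end KorobovAux
namespace KorobovAux

/-- The quotient `ln(g_k⁻¹)/ln(k+1)`. -/
noncomputable def qfun (g : ℕ → ℝ) (k : ℕ) : ℝ :=
  Real.log (g k)⁻¹ / Real.log ((k : ℝ) + 1)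

lemma log_succ_pos {k : ℕ} (hk : 1 ≤ k) : 0 < Real.log ((k : ℝ) + 1) := by
  apply Real.log_pos
  have : (1 : ℝ) ≤ (k : ℝ) := by exact_mod_cast hk
  linarith

lemma g_lt_of_lt_q {g : ℕ → ℝ} (hgpos : ∀ k, 0 < g k) {a : ℝ} {k : ℕ} (hk : 1 ≤ k)
    (h : a < qfun g k) : g k < ((k : ℝ) + 1) ^ (-a) := by
  have hlog := log_succ_pos hk
  have h1 : a * Real.log ((k : ℝ) + 1) < Real.log (g k)⁻¹ := by
    rw [qfun] at h
    calc a * Real.log ((k : ℝ) + 1) < (Real.log (g k)⁻¹ / Real.log ((k : ℝ) + 1)) *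
          Real.log ((k : ℝ) + 1) := by exact mul_lt_mul_of_pos_right h hlog
      _ = Real.log (g k)⁻¹ := by field_simp
  have h2 : Real.log (g k) < -a * Real.log ((k : ℝ) + 1) := by
    rw [Real.log_inv] at h1; linarith
  have h3 : Real.log (g k) < Real.log (((k : ℝ) + 1) ^ (-a)) := by
    rwa [Real.log_rpow (by positivity)]
  exact (Real.log_lt_log_iff (hgpos k) (Real.rpow_pos_of_pos (by positivity) _)).mp h3

lemma gt_of_q_lt {g : ℕ → ℝ} (hgpos : ∀ k, 0 < g k) {a : ℝ} {k : ℕ} (hk : 1 ≤ k)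
    (h : qfun g k < a) : ((k : ℝ) + 1) ^ (-a) < g k := by
  have hlog := log_succ_pos hk
  have h1 : Real.log (g k)⁻¹ < a * Real.log ((k : ℝ) + 1) := by
    rw [qfun, div_lt_iff₀ hlog] at h
    exact h
  have h3 : Real.log (((k : ℝ) + 1) ^ (-a)) < Real.log (g k) := by
    rw [Real.log_rpow (by positivity), Real.log_inv] at *
    linarith
  exact (Real.log_lt_log_iff (Real.rpow_pos_of_pos (by positivity) _) (hgpos k)).mp h3

lemma g_summable {g : ℕ → ℝ} (hgpos : ∀ k, 0 < g k) {a τ : ℝ} (hτ0 : 0 < τ)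
    (haτ : 1 < a * τ) (hev : ∀ᶠ k in Filter.atTop, a < qfun g k) :
    Summable (fun k : ℕ => g k ^ τ) := by
  obtain ⟨N, hN⟩ := Filter.eventually_atTop.mp (hev.and (Filter.eventually_ge_atTop 1))
  refine (summable_nat_add_iff N).mp ?_
  refine Summable.of_nonneg_of_le (f := fun n : ℕ => ((n : ℝ) + 1) ^ (-(a * τ)))
    (fun n => Real.rpow_nonneg (hgpos _).le τ) (fun n => ?_) (summable_shift_rpow haτ)
  obtain ⟨hq, hk1⟩ := hN (n + N) (by omega)
  have h1 : g (n + N) < (((n + N : ℕ) : ℝ) + 1) ^ (-a) := g_lt_of_lt_q hgpos hk1 hq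
  have h2 : g (n + N) ^ τ ≤ ((((n + N : ℕ) : ℝ) + 1) ^ (-a)) ^ τ :=
    Real.rpow_le_rpow (hgpos _).le h1.le hτ0.le
  have h3 : ((((n + N : ℕ) : ℝ) + 1) ^ (-a)) ^ τ = (((n + N : ℕ) : ℝ) + 1) ^ (-(a * τ)) := by
    rw [← Real.rpow_mul (by positivity)]
    ring_nf
  have h4 : (((n + N : ℕ) : ℝ) + 1) ^ (-(a * τ)) ≤ ((n : ℝ) + 1) ^ (-(a * τ)) := by
    apply Real.rpow_le_rpow_of_nonpos (by positivity) _ (by linarith)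
    push_cast
    linarith [Nat.cast_nonneg (α := ℝ) N]
  linarith

/-- The global upper bound on the information complexity. -/
lemma spt_upper {g r : ℕ → ℝ} (hgpos : ∀ k, 0 < g k) (hr0 : 0 < r 0) (hrmono : Monotone r)
    {τ : ℝ} (hτ0 : 0 < τ) (hs : 1 < 2 * r 0 * τ) (hGsum : Summable (fun k : ℕ => g k ^ τ))
    {d : ℕ} {ε : ℝ} (hε : ε ∈ Set.Ioo (0 : ℝ) 1) :
    (infoCount (korobovLam g r) d ε : ℝ) ≤
      Real.exp ((∑' k : ℕ, g k ^ τ) * Zc (2 * r 0 * τ)) * ε ^ (-(2 * τ)) := by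
  obtain ⟨hε0, hε1⟩ := hε
  have hb := count_upper hgpos hr0 hrmono hτ0 hs (g := g) (r := r) (d := d) hε0
  have hprod : (∏ k : Fin d, ∑' j : ℕ, korobovLam g r k.val j ^ τ) ≤
      Real.exp ((∑' k : ℕ, g k ^ τ) * Zc (2 * r 0 * τ)) := by
    have h1 : ∀ k : Fin d, (∑' j : ℕ, korobovLam g r k.val j ^ τ) ≤
        Real.exp (g k.val ^ τ * Zc (2 * r 0 * τ)) := by
      intro k
      refine le_trans (coord_tsum_le hgpos hr0 hrmono hτ0 hs k.val) ?_
      linarith [Real.add_one_le_exp (g k.val ^ τ * Zc (2 * r 0 * τ))]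
    calc (∏ k : Fin d, ∑' j : ℕ, korobovLam g r k.val j ^ τ)
        ≤ ∏ k : Fin d, Real.exp (g k.val ^ τ * Zc (2 * r 0 * τ)) :=
          Finset.prod_le_prod (fun k _ => tsum_nonneg fun j =>
            Real.rpow_nonneg (kor_pos g r hgpos _ j).le τ) (fun k _ => h1 k)
      _ = Real.exp (∑ k : Fin d, g k.val ^ τ * Zc (2 * r 0 * τ)) := (Real.exp_sum _ _).symm
      _ ≤ Real.exp ((∑' k : ℕ, g k ^ τ) * Zc (2 * r 0 * τ)) := by
          apply Real.exp_le_exp.mpr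
          rw [← Finset.sum_mul]
          apply mul_le_mul_of_nonneg_right _ (Zc_nonneg _)
          rw [Fin.sum_univ_eq_sum_range (fun k => g k ^ τ) d]
          exact Summable.sum_le_tsum _ (fun k _ => Real.rpow_nonneg (hgpos k).le τ) hGsum
  have heps : (ε ^ 2) ^ (-τ) = ε ^ (-(2 * τ)) := by
    rw [← Real.rpow_natCast ε 2, ← Real.rpow_mul hε0.le]
    norm_num
  calc (infoCount (korobovLam g r) d ε : ℝ)
      ≤ (ε ^ 2) ^ (-τ) * ∏ k : Fin d, ∑' j : ℕ, korobovLam g r k.val j ^ τ := hb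
    _ ≤ (ε ^ 2) ^ (-τ) * Real.exp ((∑' k : ℕ, g k ^ τ) * Zc (2 * r 0 * τ)) :=
        mul_le_mul_of_nonneg_left hprod (Real.rpow_nonneg (by positivity) _)
    _ = Real.exp ((∑' k : ℕ, g k ^ τ) * Zc (2 * r 0 * τ)) * ε ^ (-(2 * τ)) := by
        rw [heps]; ring

end KorobovAux
namespace KorobovAux

section Lower

variable {g r : ℕ → ℝ}
variable (hgpos : ∀ k, 0 < g k) (hr0 : 0 < r 0) (hrmono : Monotone r)

include hgpos hr0 hrmono

lemma count_lower_inject {d : ℕ} {ε : ℝ} (hε0 : 0 < ε) {n : ℕ} (φ : ℕ → (Fin d → ℕ))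
    (hinj : Set.InjOn φ (Set.Iio n))
    (hmem : ∀ m < n, ε ^ 2 < ∏ k : Fin d, korobovLam g r k.val (φ m k)) :
    (n : ℝ) ≤ (infoCount (korobovLam g r) d ε : ℝ) := by
  have hτ0 : (0 : ℝ) < 1 / r 0 := by positivity
  have hs : (1 : ℝ) < 2 * r 0 * (1 / r 0) := by
    have : 2 * r 0 * (1 / r 0) = 2 := by field_simp
    rw [this]; norm_num
  have hfin := korSet_finite hgpos hr0 hrmono hτ0 hs (g := g) (r := r) (d := d) hε0
  have hsub : φ '' (Set.Iio n) ⊆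
      {j : Fin d → ℕ | ε ^ 2 < ∏ k : Fin d, korobovLam g r k.val (j k)} := by
    rintro - ⟨m, hm, rfl⟩
    exact hmem m hm
  have hcard : n ≤ infoCount (korobovLam g r) d ε := by
    rw [infoCount, Nat.card_coe_set_eq]
    calc n = (Finset.Iio n).card := (Nat.card_Iio n).symm
      _ = (Set.Iio n).ncard := by rw [← Finset.coe_Iio, Set.ncard_coe_finset]
      _ = (φ '' Set.Iio n).ncard := (Set.ncard_image_of_injOn hinj).symm
      _ ≤ _ := Set.ncard_le_ncard hsub hfin
  exact_mod_cast hcard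

lemma lower_r (hg1 : g 0 ≤ 1) {C p : ℝ} (hC : 0 ≤ C) (hp : 0 ≤ p)
    (hb : ∀ d : ℕ, 1 ≤ d → ∀ ε : ℝ, ε ∈ Set.Ioo (0 : ℝ) 1 →
      (infoCount (korobovLam g r) d ε : ℝ) ≤ C * ε ^ (-p)) :
    1 / r 0 ≤ p := by
  by_contra hcon
  push_neg at hcon
  have hβ : 0 < 1 / r 0 - p := by linarith
  set β := 1 / r 0 - p with hβdef
  have hc0 : 0 < g 0 ^ (1 / (2 * r 0)) := Real.rpow_pos_of_pos (hgpos 0) _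
  set c := g 0 ^ (1 / (2 * r 0)) with hcdef
  -- main estimate
  have hest : ∀ ε : ℝ, ε ∈ Set.Ioo (0 : ℝ) 1 →
      2 * c * ε ^ (-(1 / r 0)) - 2 ≤ C * ε ^ (-p) := by
    intro ε hεI
    obtain ⟨hε0, hε1⟩ := hεI
    set T := 2 * (g 0 / ε ^ 2) ^ (1 / (2 * r 0)) with hTdef
    have hTval : T = 2 * c * ε ^ (-(1 / r 0)) := by
      rw [hTdef, Real.div_rpow (hgpos 0).le (sq_nonneg ε), hcdef]
      have h2 : (ε ^ 2) ^ (1 / (2 * r 0)) = ε ^ (1 / r 0) := by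
        rw [← Real.rpow_natCast ε 2, ← Real.rpow_mul hε0.le]
        congr 1
        push_cast
        field_simp
      rw [h2, Real.rpow_neg hε0.le]
      ring
    have claimA : ∀ j : ℕ, ((j : ℝ) + 1) < T → ε ^ 2 < korobovLam g r 0 j := by
      intro j hj
      cases j with
      | zero =>
        rw [kor_zero]
        calc ε ^ 2 < 1 ^ 2 := by
              apply pow_lt_pow_left₀ hε1 hε0.le
              norm_num
          _ = 1 := one_pow 2
      | succ j =>
        rw [kor_succ]
        set B := (g 0 / ε ^ 2) ^ (1 / (2 * r 0)) with hBdef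
        have hB0 : 0 < B := Real.rpow_pos_of_pos (div_pos (hgpos 0) (pow_pos hε0 2)) _
        have hm0 : (0 : ℝ) < (((j + 2) / 2 : ℕ) : ℝ) := lt_of_lt_of_le one_pos (m_one_le j)
        have hmB : (((j + 2) / 2 : ℕ) : ℝ) < B := by
          have h1 : (((j + 2) / 2 : ℕ) : ℝ) ≤ ((j : ℝ) + 2) / 2 := m_le j
          have h2 : ((j : ℝ) + 2) / 2 < T / 2 := by
            push_cast at hj ⊢
            linarith
          have h3 : T / 2 = B := by rw [hTdef, hBdef]; ring
          linarith
        have hpow : B ^ (-(2 * r 0)) < (((j + 2) / 2 : ℕ) : ℝ) ^ (-(2 * r 0)) :=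
          Real.rpow_lt_rpow_of_neg hm0 hmB (by linarith)
        have hBval : B ^ (-(2 * r 0)) = ε ^ 2 / g 0 := by
          rw [hBdef, ← Real.rpow_mul (div_nonneg (hgpos 0).le (sq_nonneg ε))]
          have : 1 / (2 * r 0) * -(2 * r 0) = -1 := by field_simp
          rw [this, Real.rpow_neg_one, inv_div]
        calc ε ^ 2 = g 0 * (ε ^ 2 / g 0) := by
              rw [mul_div_assoc'] 
              exact (mul_div_cancel_left₀ _ (hgpos 0).ne').symm
          _ = g 0 * B ^ (-(2 * r 0)) := by rw [hBval]
          _ < g 0 * (((j + 2) / 2 : ℕ) : ℝ) ^ (-(2 * r 0)) :=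
              mul_lt_mul_of_pos_left hpow (hgpos 0)
    rcases le_or_gt T 2 with h2 | h2
    · have : (0 : ℝ) ≤ C * ε ^ (-p) := by positivity
      rw [← hTval]
      linarith
    · set n := ⌊T - 1⌋₊ with hndef
      have hn1 : (n : ℝ) ≤ T - 1 := Nat.floor_le (by linarith)
      have hn2 : T - 1 < (n : ℝ) + 1 := Nat.lt_floor_add_one _
      have hcount : (n : ℝ) ≤ (infoCount (korobovLam g r) 1 ε : ℝ) := by
        apply count_lower_inject hgpos hr0 hrmono hε0 (fun m => fun _ => m)
        · intro m _ m' _ hmm'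
          exact congrFun hmm' 0
        · intro m hm
          rw [Fin.prod_univ_one]
          apply claimA
          have : (m : ℝ) + 1 ≤ (n : ℝ) := by exact_mod_cast hm
          linarith
      have hfinal := hb 1 le_rfl ε ⟨hε0, hε1⟩
      rw [← hTval]
      linarith
  -- choose a small ε to get a contradiction
  have hδ0 : (0 : ℝ) < (2 * c / (C + 3)) ^ (1 / β) := Real.rpow_pos_of_pos (by positivity) _
  set δ := (2 * c / (C + 3)) ^ (1 / β) with hδdef
  set ε := min (1 / 2) δ with hεdef
  have hε0 : 0 < ε := lt_min (by norm_num) hδ0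
  have hε1 : ε < 1 := lt_of_le_of_lt (min_le_left _ _) (by norm_num)
  have hεδ : ε ≤ δ := min_le_right _ _
  have hkey := hest ε ⟨hε0, hε1⟩
  have honele : (1 : ℝ) ≤ ε ^ (-p) := by
    calc (1 : ℝ) = ε ^ (0 : ℝ) := (Real.rpow_zero ε).symm
      _ ≤ ε ^ (-p) := Real.rpow_le_rpow_of_exponent_ge hε0 hε1.le (by linarith)
  have hd2 : 2 * c * ε ^ (-(1 / r 0)) ≤ (C + 2) * ε ^ (-p) := by nlinarith
  have hsplit : ε ^ (-(1 / r 0)) = ε ^ (-p) * ε ^ (-β) := by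
    rw [← Real.rpow_add hε0]
    congr 1
    rw [hβdef]; ring
  have hp0 : 0 < ε ^ (-p) := Real.rpow_pos_of_pos hε0 _
  have hd3 : 2 * c * ε ^ (-β) ≤ C + 2 := by
    rw [hsplit] at hd2
    have h' : (2 * c * ε ^ (-β)) * ε ^ (-p) ≤ (C + 2) * ε ^ (-p) := by
      calc (2 * c * ε ^ (-β)) * ε ^ (-p) = 2 * c * (ε ^ (-p) * ε ^ (-β)) := by ring
        _ ≤ (C + 2) * ε ^ (-p) := hd2
    exact le_of_mul_le_mul_right h' hp0
  have hδval : δ ^ (-β) = (C + 3) / (2 * c) := by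
    rw [hδdef, ← Real.rpow_mul (by positivity)]
    have : 1 / β * -β = -1 := by field_simp
    rw [this, Real.rpow_neg_one, inv_div]
  have hεβ : (C + 3) / (2 * c) ≤ ε ^ (-β) := by
    rw [← hδval]
    exact Real.rpow_le_rpow_of_nonpos hε0 hεδ (by linarith)
  have hfin : C + 3 ≤ 2 * c * ε ^ (-β) := by
    rw [div_le_iff₀ (mul_pos two_pos hc0)] at hεβ
    linarith
  linarith

end Lower

end KorobovAux
namespace KorobovAux

lemma kor_one (g r : ℕ → ℝ) (k : ℕ) : korobovLam g r k 1 = g k := by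
  rw [show (1 : ℕ) = 0 + 1 from rfl, kor_succ]
  norm_num

lemma lower_g {g r : ℕ → ℝ} (hgpos : ∀ k, 0 < g k) (hganti : Antitone g)
    (hr0 : 0 < r 0) (hrmono : Monotone r) {C p a : ℝ} (hC : 0 ≤ C) (hp : 0 ≤ p) (ha : 0 < a)
    (hfreq : ∃ᶠ k in Filter.atTop, qfun g k < a)
    (hb : ∀ d : ℕ, 1 ≤ d → ∀ ε : ℝ, ε ∈ Set.Ioo (0 : ℝ) 1 →
      (infoCount (korobovLam g r) d ε : ℝ) ≤ C * ε ^ (-p)) :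
    2 / a ≤ p := by
  by_contra hcon
  push_neg at hcon
  have hap : a * p < 2 := by
    rw [lt_div_iff₀ ha] at hcon
    linarith
  have hβ : 0 < 1 - a * p / 2 := by linarith
  set β := 1 - a * p / 2 with hβdef
  have hC'0 : (0 : ℝ) < max C 1 := lt_of_lt_of_le one_pos (le_max_right _ _)
  set C' := max C 1 with hC'def
  obtain ⟨K, ⟨hqK, hKge⟩⟩ :=
    (hfreq.and_eventually (Filter.eventually_ge_atTop (max 1 ⌈C' ^ (1 / β)⌉₊))).exists
  have hK1 : 1 ≤ K := le_trans (le_max_left _ _) hKge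
  have hKN : C' ^ (1 / β) ≤ (K : ℝ) := by
    have h1 : ⌈C' ^ (1 / β)⌉₊ ≤ K := le_trans (le_max_right _ _) hKge
    exact (Nat.ceil_le.mp h1)
  have hbase : (1 : ℝ) < (K : ℝ) + 1 := by
    have : (1 : ℝ) ≤ (K : ℝ) := by exact_mod_cast hK1
    linarith
  have hbase0 : (0 : ℝ) < (K : ℝ) + 1 := by linarith
  have hX : C' < ((K : ℝ) + 1) ^ β := by
    have h1 : (C' ^ (1 / β)) ^ β = C' := by
      rw [← Real.rpow_mul hC'0.le, one_div, inv_mul_cancel₀ hβ.ne', Real.rpow_one]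
    calc C' = (C' ^ (1 / β)) ^ β := h1.symm
      _ < ((K : ℝ) + 1) ^ β :=
        Real.rpow_lt_rpow (Real.rpow_nonneg hC'0.le _) (by linarith) hβ
  set ε := ((K : ℝ) + 1) ^ (-(a / 2)) with hεdef
  have hε0 : 0 < ε := Real.rpow_pos_of_pos hbase0 _
  have hε1 : ε < 1 := Real.rpow_lt_one_of_one_lt_of_neg hbase (by linarith)
  have hε2 : ε ^ 2 = ((K : ℝ) + 1) ^ (-a) := by
    rw [hεdef, ← Real.rpow_natCast (((K : ℝ) + 1) ^ (-(a / 2))) 2, ← Real.rpow_mul hbase0.le]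
    norm_num
  have hgK : ε ^ 2 < g K := by
    rw [hε2]
    exact gt_of_q_lt hgpos hK1 hqK
  -- counting lower bound with d = K + 1
  have hcount : ((K : ℝ) + 1) ≤ (infoCount (korobovLam g r) (K + 1) ε : ℝ) := by
    have h := count_lower_inject hgpos hr0 hrmono hε0 (n := K + 1)
      (fun m => fun i : Fin (K + 1) => if (i : ℕ) = m then 1 else 0) ?hinj ?hmem
    · push_cast at h
      linarith
    case hinj =>
      intro m hm m' hm' hmm'
      have h := congrFun hmm' ⟨m, Set.mem_Iio.mp hm⟩
      have h' : (if m = m then (1 : ℕ) else 0) = (if m = m' then 1 else 0) := h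
      rw [if_pos rfl] at h'
      split_ifs at h' with hc
      all_goals try exact hc
      all_goals exact absurd h'.symm (by norm_num)
    case hmem =>
      intro m hm
      have hprod : (∏ i : Fin (K + 1), korobovLam g r i.val
          (if (i : ℕ) = m then 1 else 0)) = g m := by
        rw [Finset.prod_eq_single_of_mem (⟨m, hm⟩ : Fin (K + 1)) (Finset.mem_univ _)]
        · show korobovLam g r m (if m = m then 1 else 0) = g m
          rw [if_pos rfl, kor_one]
        · intro b _ hbne
          have hbv : (b : ℕ) ≠ m := by
            intro hc
            exact hbne (Fin.ext (by simpa using hc))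
          rw [if_neg hbv, kor_zero]
      rw [hprod]
      calc ε ^ 2 < g K := hgK
        _ ≤ g m := hganti (by omega)
  have hfinal := hb (K + 1) (by omega) ε ⟨hε0, hε1⟩
  have hmain : ((K : ℝ) + 1) ≤ C * ε ^ (-p) := le_trans hcount hfinal
  have hεp : ε ^ (-p) = ((K : ℝ) + 1) ^ (a / 2 * p) := by
    rw [hεdef, ← Real.rpow_mul hbase0.le]
    ring_nf
  have hXpos : (0 : ℝ) < ((K : ℝ) + 1) ^ (a / 2 * p) := Real.rpow_pos_of_pos hbase0 _
  have hsum : ((K : ℝ) + 1) ^ β * ((K : ℝ) + 1) ^ (a / 2 * p) = (K : ℝ) + 1 := by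
    rw [← Real.rpow_add hbase0]
    have : β + a / 2 * p = 1 := by rw [hβdef]; ring
    rw [this, Real.rpow_one]
  have hle : ((K : ℝ) + 1) ^ β ≤ C := by
    have h' : ((K : ℝ) + 1) ^ β * ((K : ℝ) + 1) ^ (a / 2 * p) ≤
        C * ((K : ℝ) + 1) ^ (a / 2 * p) := by
      rw [hsum, ← hεp]
      exact hmain
    exact le_of_mul_le_mul_right h' hXpos
  have : C' < C := lt_of_lt_of_le hX hle
  have : C ≤ C' := le_max_left _ _
  linarith

end KorobovAux
/-- Korobov kernels: SPT iff `A_* = liminf ln(g_k⁻¹)/ln k > 0`, and in that case the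
exponent of SPT is `max{2/A_*, 1/r₁}` (when `A_* = ∞`, `2/A_* = 0` via
`EReal.toReal ⊤ = 0` and `2/0 = 0`). -/
theorem korobov_spt (g r : ℕ → ℝ) (hg1 : g 0 ≤ 1) (hganti : Antitone g)
    (hgpos : ∀ k, 0 < g k) (hr0 : 0 < r 0) (hrmono : Monotone r) :
    (IsSPT (korobovLam g r) ↔
      0 < Filter.liminf (fun k : ℕ => (Real.log (g k)⁻¹ / Real.log ((k : ℝ) + 1) : EReal))
        Filter.atTop) ∧
    (0 < Filter.liminf (fun k : ℕ => (Real.log (g k)⁻¹ / Real.log ((k : ℝ) + 1) : EReal))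
        Filter.atTop →
      sptExponent (korobovLam g r) =
        max (2 / (Filter.liminf
          (fun k : ℕ => (Real.log (g k)⁻¹ / Real.log ((k : ℝ) + 1) : EReal))
          Filter.atTop).toReal) (1 / r 0)) := by
  classical
  open KorobovAux in
  have hqre : (fun k : ℕ => (Real.log (g k)⁻¹ / Real.log ((k : ℝ) + 1) : EReal))
      = fun k : ℕ => ((KorobovAux.qfun g k : ℝ) : EReal) := by
    funext k
    rw [KorobovAux.qfun]
    exact (EReal.coe_div _ _).symm
  rw [hqre]
  set L := Filter.liminf (fun k : ℕ => ((KorobovAux.qfun g k : ℝ) : EReal)) Filter.atTop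
    with hLdef
  have hr0inv : (0 : ℝ) < 1 / r 0 := by positivity
  have hq0 : ∀ k, 0 ≤ KorobovAux.qfun g k := by
    intro k
    apply div_nonneg _ (Real.log_nonneg (by push_cast; linarith [Nat.cast_nonneg (α := ℝ) k]))
    rw [Real.log_inv]
    exact neg_nonneg.mpr (Real.log_nonpos (hgpos k).le (le_trans (hganti (Nat.zero_le k)) hg1))
  have hL0 : (0 : EReal) ≤ L := by
    exact Filter.le_liminf_of_le (by isBoundedDefault)
      (Filter.Eventually.of_forall fun k => by exact_mod_cast hq0 k)
  -- upper bound: a valid SPT pair for each p above the critical exponent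
  have hpair : ∀ p : ℝ, max (2 / L.toReal) (1 / r 0) < p → 0 < L →
      ∃ C : ℝ, 0 ≤ C ∧ ∀ d : ℕ, 1 ≤ d → ∀ ε : ℝ, ε ∈ Set.Ioo (0 : ℝ) 1 →
        (infoCount (korobovLam g r) d ε : ℝ) ≤ C * ε ^ (-p) := by
    intro p hmax hL
    have hpr : 1 / r 0 < p := lt_of_le_of_lt (le_max_right _ _) hmax
    have hp0 : 0 < p := lt_trans hr0inv hpr
    set τ := p / 2 with hτdef
    have hτ0 : 0 < τ := by rw [hτdef]; linarith
    have hs : 1 < 2 * r 0 * τ := by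
      have he : 2 * r 0 * τ = r 0 * p := by rw [hτdef]; ring
      rw [he]
      rw [div_lt_iff₀ hr0] at hpr
      linarith
    obtain ⟨a, haL, haτ⟩ : ∃ a : ℝ, (a : EReal) < L ∧ 1 < a * τ := by
      rcases eq_or_ne L ⊤ with htop | htop
      · refine ⟨2 / p + 1, ?_, ?_⟩
        · rw [htop]; exact EReal.coe_lt_top _
        · have he : (2 / p + 1) * τ = 1 + τ := by rw [hτdef]; field_simp
          rw [he]; linarith
      · have hbot : L ≠ ⊥ := by
          intro hbb
          rw [hbb] at hL
          exact absurd hL (by simp)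
        have hLA : L = ((L.toReal : ℝ) : EReal) := (EReal.coe_toReal htop hbot).symm
        have hA0 : 0 < L.toReal := by
          rw [hLA] at hL
          exact_mod_cast hL
        have h2A : 2 / L.toReal < p := lt_of_le_of_lt (le_max_left _ _) hmax
        have h2p : 2 / p < L.toReal := by
          rw [div_lt_iff₀ hA0] at h2A
          rw [div_lt_iff₀ hp0]
          linarith
        refine ⟨(2 / p + L.toReal) / 2, ?_, ?_⟩
        · rw [hLA]
          exact_mod_cast (by linarith : (2 / p + L.toReal) / 2 < L.toReal)
        · have h2p0 : 0 < 2 / p := by positivity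
          have he : (2 / p) * τ = 1 := by rw [hτdef]; field_simp
          calc 1 = (2 / p) * τ := he.symm
            _ < ((2 / p + L.toReal) / 2) * τ := by
                apply mul_lt_mul_of_pos_right _ hτ0
                linarith
    have hev : ∀ᶠ k in Filter.atTop, a < KorobovAux.qfun g k :=
      (Filter.eventually_lt_of_lt_liminf haL).mono fun k hk => EReal.coe_lt_coe_iff.mp hk
    have hGsum := KorobovAux.g_summable hgpos hτ0 haτ hev
    refine ⟨Real.exp ((∑' k : ℕ, g k ^ τ) * KorobovAux.Zc (2 * r 0 * τ)),
      (Real.exp_pos _).le, ?_⟩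
    intro d hd ε hε
    have hub := KorobovAux.spt_upper hgpos hr0 hrmono hτ0 hs hGsum hε (d := d)
    have h2τ : -(2 * τ) = -p := by rw [hτdef]; ring
    rwa [h2τ] at hub
  constructor
  · constructor
    · rintro ⟨C, p, hC, hp, hb⟩
      by_contra hL
      have hLeq : L = 0 := le_antisymm (not_lt.mp hL) hL0
      have ha : (0 : ℝ) < 2 / (p + 1) := by positivity
      have hfreq : ∃ᶠ k in Filter.atTop, KorobovAux.qfun g k < 2 / (p + 1) := by
        have hlt : L < ((2 / (p + 1) : ℝ) : EReal) := by
          rw [hLeq]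
          exact_mod_cast ha
        exact (Filter.frequently_lt_of_liminf_lt (by isBoundedDefault) hlt).mono
          fun k hk => EReal.coe_lt_coe_iff.mp hk
      have hlow := KorobovAux.lower_g hgpos hganti hr0 hrmono hC hp ha hfreq hb
      have heq : 2 / (2 / (p + 1)) = p + 1 := by field_simp
      rw [heq] at hlow
      linarith
    · intro hL
      obtain ⟨C, hC, hb⟩ := hpair (max (2 / L.toReal) (1 / r 0) + 1) (by linarith) hL
      have hmp : (0 : ℝ) ≤ max (2 / L.toReal) (1 / r 0) + 1 := by
        have := le_max_right (2 / L.toReal) (1 / r 0)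
        linarith
      exact ⟨C, _, hC, hmp, hb⟩
  · intro hL
    rw [sptExponent]
    apply le_antisymm
    · apply le_of_forall_pos_le_add
      intro δ hδ
      apply csInf_le ⟨0, fun x hx => hx.1⟩
      refine ⟨?_, hpair _ (by linarith) hL⟩
      have := le_max_right (2 / L.toReal) (1 / r 0)
      linarith
    · apply le_csInf
      · refine ⟨max (2 / L.toReal) (1 / r 0) + 1, ?_, hpair _ (by linarith) hL⟩
        have := le_max_right (2 / L.toReal) (1 / r 0)
        linarith
      · rintro p ⟨hp0', C, hC, hb⟩
        have h1 : 1 / r 0 ≤ p := KorobovAux.lower_r hgpos hr0 hrmono hg1 hC hp0' hb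
        have hp0 : 0 < p := lt_of_lt_of_le hr0inv h1
        have h2 : 2 / L.toReal ≤ p := by
          rcases eq_or_ne L ⊤ with htop | htop
          · rw [htop]
            simp only [EReal.toReal_top, div_zero]
            exact hp0.le
          · have hbot : L ≠ ⊥ := by
              intro hbb
              rw [hbb] at hL
              exact absurd hL (by simp)
            have hLA : L = ((L.toReal : ℝ) : EReal) := (EReal.coe_toReal htop hbot).symm
            have hA0 : 0 < L.toReal := by
              rw [hLA] at hL
              exact_mod_cast hL
            by_contra hcon
            push_neg at hcon
            have h2p : L.toReal < 2 / p := by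
              rw [lt_div_iff₀ hp0]
              rw [lt_div_iff₀ hA0] at hcon
              linarith
            set a := (L.toReal + 2 / p) / 2 with hadef
            have ha0 : 0 < a := by
              have : 0 < 2 / p := by positivity
              rw [hadef]; linarith
            have hfreq : ∃ᶠ k in Filter.atTop, KorobovAux.qfun g k < a := by
              have hlt : L < ((a : ℝ) : EReal) := by
                rw [hLA]
                exact_mod_cast (by rw [hadef]; linarith : L.toReal < a)
              exact (Filter.frequently_lt_of_liminf_lt (by isBoundedDefault) hlt).mono
                fun k hk => EReal.coe_lt_coe_iff.mp hk
            have hlow := KorobovAux.lower_g hgpos hganti hr0 hrmono hC hp0' ha0 hfreq hb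
            have hpa : p < 2 / a := by
              have ha2p : a < 2 / p := by rw [hadef]; linarith
              have hpp : 2 / (2 / p) = p := by field_simp
              calc p = 2 / (2 / p) := hpp.symm
                _ < 2 / a := by
                    apply div_lt_div_of_pos_left (by norm_num) ha0 ha2p
            linarith
        exact max_le h2 h1
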